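/- Let d and C be positive integers, let P be a nonempty compact subset of ℝ^d with diameter D = sup { ‖u − v‖ : u, v ∈ P }, let 𝒳 be any set of data points, and for each class i ∈ {1,…,C} let l^i : ℝ^d × 𝒳 → ℝ be such that for every x ∈ 𝒳 the function θ ↦ l^i(θ, x) is differentiable with β-Lipschitz gradient, for some β > 0, and the gradients are uniformly bounded on P: ‖∇_θ l^i(p, x)‖ ≤ B for all p ∈ P, x ∈ 𝒳, i ∈ {1,…,C}. For each x ∈ 𝒳 let s_1(x), …, s_C(x) ≥ 0 with Σ_{i=1}^{C} s_i(x) = 1. Then for every x ∈ 𝒳, every m ∈ P, and every choice of class prompts p_1, …, p_C ∈ P, Σ_{i=1}^{C} s_i(x) · l^i(m, x) ≤ Σ_{i=1}^{C} s_i(x) · ( l^i(p_i, x) + (β/2)·‖m − p_i‖² ) + D·B. Moreover, for each fixed x, the right-hand side, viewed as a function of m over ℝ^d, is minimized at m = Σ_{i=1}^{C} s_i(x) · p_i. -/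

import Mathlib

open scoped BigOperators
open InnerProductSpace

section Aux
variable {E : Type*} [NormedAddCommGroup E] [InnerProductSpace ℝ E] [CompleteSpace E]

lemma ccmp_descent_lemma (f : E → ℝ) (β : ℝ)
    (hdiff : Differentiable ℝ f)
    (hlip : ∀ θ₁ θ₂, ‖gradient f θ₁ - gradient f θ₂‖ ≤ β * ‖θ₁ - θ₂‖)
    (p m : E) :
    f m ≤ f p + inner ℝ (gradient f p) (m - p) + β / 2 * ‖m - p‖ ^ 2 := by
  set v := m - p with hv
  set g : ℝ → ℝ := fun t =>
    f (p + t • v) - t * inner ℝ (gradient f p) v - β / 2 * t ^ 2 * ‖v‖ ^ 2 with hg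
  have hderiv : ∀ t : ℝ, HasDerivAt g
      ((inner ℝ (gradient f (p + t • v)) v : ℝ) - inner ℝ (gradient f p) v - β * t * ‖v‖ ^ 2) t := by
    intro t
    have hc : HasDerivAt (fun t : ℝ => p + t • v) v t := by
      simpa using ((hasDerivAt_id t).smul_const v).const_add p
    have hf : HasFDerivAt f (toDual ℝ E (gradient f (p + t • v))) (p + t • v) :=
      (hdiff (p + t • v)).hasGradientAt.hasFDerivAt
    have h1 : HasDerivAt (fun t : ℝ => f (p + t • v))
        ((inner ℝ (gradient f (p + t • v)) v : ℝ)) t := by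
      have := hf.comp_hasDerivAt t hc
      rw [toDual_apply_apply] at this
      exact this
    have h2 : HasDerivAt (fun t : ℝ => t * inner ℝ (gradient f p) v)
        ((inner ℝ (gradient f p) v : ℝ)) t := by
      simpa using (hasDerivAt_id t).mul_const (inner ℝ (gradient f p) v : ℝ)
    have h3 : HasDerivAt (fun t : ℝ => β / 2 * t ^ 2 * ‖v‖ ^ 2)
        (β * t * ‖v‖ ^ 2) t := by
      have := ((hasDerivAt_pow 2 t).const_mul (β / 2)).mul_const (‖v‖ ^ 2)
      refine this.congr_deriv ?_
      rw [show (2:ℕ) - 1 = 1 from rfl, pow_one]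
      push_cast
      ring
    exact (h1.sub h2).sub h3
  have hmono : g 1 ≤ g 0 := by
    have := antitoneOn_of_deriv_nonpos (convex_Icc (0:ℝ) 1)
      (fun t _ => (hderiv t).continuousAt.continuousWithinAt)
      (fun t _ => (hderiv t).differentiableAt.differentiableWithinAt)
      (fun t ht => by
        rw [(hderiv t).deriv]
        rw [interior_Icc] at ht
        have h0 : (0:ℝ) ≤ t := le_of_lt ht.1
        have hb : (inner ℝ (gradient f (p + t • v)) v : ℝ) - inner ℝ (gradient f p) v
            ≤ β * t * ‖v‖ ^ 2 := by
          calc (inner ℝ (gradient f (p + t • v)) v : ℝ) - inner ℝ (gradient f p) v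
              = inner ℝ (gradient f (p + t • v) - gradient f p) v := by
                rw [inner_sub_left]
            _ ≤ ‖gradient f (p + t • v) - gradient f p‖ * ‖v‖ := real_inner_le_norm _ _
            _ ≤ (β * ‖(p + t • v) - p‖) * ‖v‖ :=
                mul_le_mul_of_nonneg_right (hlip _ _) (norm_nonneg _)
            _ = β * t * ‖v‖ ^ 2 := by
                rw [add_sub_cancel_left, norm_smul, Real.norm_eq_abs, abs_of_nonneg h0]
                ring
        linarith)
    exact this (Set.left_mem_Icc.2 zero_le_one) (Set.right_mem_Icc.2 zero_le_one) zero_le_one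
  have hg1 : g 1 = f m - inner ℝ (gradient f p) v - β / 2 * ‖v‖ ^ 2 := by
    simp [hg, hv]
  have hg0 : g 0 = f p := by simp [hg]
  rw [hg1, hg0] at hmono
  linarith

lemma ccmp_mean_min {C : ℕ} (t : Fin C → ℝ) (ht : ∀ i, 0 ≤ t i) (hsum : ∑ i, t i = 1)
    (p : Fin C → E) (m' : E) :
    ∑ i, t i * ‖(∑ j, t j • p j) - p i‖ ^ 2 ≤ ∑ i, t i * ‖m' - p i‖ ^ 2 := by
  set mb : E := ∑ j, t j • p j with hmb
  set w : E := m' - mb with hw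
  have hexp : ∀ i, ‖m' - p i‖ ^ 2
      = ‖w‖ ^ 2 + 2 * inner ℝ w (mb - p i) + ‖mb - p i‖ ^ 2 := by
    intro i
    have h := norm_add_sq_real w (mb - p i)
    have h2 : w + (mb - p i) = m' - p i := by rw [hw]; abel
    rw [h2] at h
    linarith
  have hzero : ∑ i, t i • (mb - p i) = 0 := by
    rw [Finset.sum_congr rfl (fun i _ => smul_sub (t i) mb (p i)),
      Finset.sum_sub_distrib, ← Finset.sum_smul, hsum, one_smul, hmb, sub_self]
  have hcross : ∑ i, t i * (inner ℝ w (mb - p i) : ℝ) = 0 := by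
    have : ∑ i, t i * (inner ℝ w (mb - p i) : ℝ) = inner ℝ w (∑ i, t i • (mb - p i)) := by
      rw [inner_sum]
      exact Finset.sum_congr rfl fun i _ => (real_inner_smul_right _ _ _).symm
    rw [this, hzero, inner_zero_right]
  have hsplit : ∑ i, t i * ‖m' - p i‖ ^ 2
      = ‖w‖ ^ 2 * (∑ i, t i) + 2 * (∑ i, t i * (inner ℝ w (mb - p i) : ℝ))
        + ∑ i, t i * ‖mb - p i‖ ^ 2 := by
    calc ∑ i, t i * ‖m' - p i‖ ^ 2
        = ∑ i, (‖w‖ ^ 2 * t i + 2 * (t i * (inner ℝ w (mb - p i) : ℝ)) + t i * ‖mb - p i‖ ^ 2) :=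
          Finset.sum_congr rfl fun i _ => by rw [hexp i]; ring
      _ = _ := by
          rw [Finset.sum_add_distrib, Finset.sum_add_distrib, ← Finset.mul_sum, ← Finset.mul_sum]
  rw [hsplit, hcross, hsum]
  nlinarith [sq_nonneg ‖w‖]

end Aux

/-- pointwise quadratic upper bound with data-dependent soft
mixing scores, and optimality of the per-sample CCMP
`m = ∑ i, s i x • p i` for the right-hand side. -/
theorem ccmp_data_dependent_scores
    (d C : ℕ) (hd : 0 < d) (hC : 0 < C)
    (P : Set (EuclideanSpace ℝ (Fin d))) (hPne : P.Nonempty) (hP : IsCompact P)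
    (D : ℝ) (hD : D = Metric.diam P)
    (𝒳 : Type*)
    (l : Fin C → EuclideanSpace ℝ (Fin d) → 𝒳 → ℝ)
    (β : ℝ) (hβ : 0 < β)
    (hdiff : ∀ i x, Differentiable ℝ (fun θ => l i θ x))
    (hlip : ∀ i x θ₁ θ₂,
      ‖gradient (fun θ => l i θ x) θ₁ - gradient (fun θ => l i θ x) θ₂‖ ≤ β * ‖θ₁ - θ₂‖)
    (B : ℝ)
    (hgradbd : ∀ i x, ∀ q ∈ P, ‖gradient (fun θ => l i θ x) q‖ ≤ B)
    (s : 𝒳 → Fin C → ℝ) (hs : ∀ x i, 0 ≤ s x i) (hssum : ∀ x, ∑ i, s x i = 1) :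
    ∀ (x : 𝒳), ∀ m ∈ P, ∀ p : Fin C → EuclideanSpace ℝ (Fin d), (∀ i, p i ∈ P) →
      (∑ i, s x i * l i m x ≤
        (∑ i, s x i * (l i (p i) x + β / 2 * ‖m - p i‖ ^ 2)) + D * B) ∧
      (∀ m' : EuclideanSpace ℝ (Fin d),
        ∑ i, s x i * (l i (p i) x + β / 2 * ‖(∑ j, s x j • p j) - p i‖ ^ 2) ≤
          ∑ i, s x i * (l i (p i) x + β / 2 * ‖m' - p i‖ ^ 2)) := by
  intro x m hm p hp
  have hB : 0 ≤ B := le_trans (norm_nonneg _)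
    (hgradbd ⟨0, hC⟩ x hPne.choose hPne.choose_spec)
  have hDnn : 0 ≤ D := hD ▸ Metric.diam_nonneg
  constructor
  · -- pointwise bound
    have hterm : ∀ i, s x i * l i m x
        ≤ s x i * (l i (p i) x + β / 2 * ‖m - p i‖ ^ 2 + D * B) := by
      intro i
      refine mul_le_mul_of_nonneg_left ?_ (hs x i)
      have hdesc := ccmp_descent_lemma (fun θ => l i θ x) β (hdiff i x) (hlip i x) (p i) m
      have hinner : (inner ℝ (gradient (fun θ => l i θ x) (p i)) (m - p i) : ℝ) ≤ D * B := by
        calc (inner ℝ (gradient (fun θ => l i θ x) (p i)) (m - p i) : ℝ)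
            ≤ ‖gradient (fun θ => l i θ x) (p i)‖ * ‖m - p i‖ := real_inner_le_norm _ _
          _ ≤ B * D := by
              refine mul_le_mul (hgradbd i x (p i) (hp i)) ?_ (norm_nonneg _) hB
              rw [hD, ← dist_eq_norm]
              exact Metric.dist_le_diam_of_mem hP.isBounded hm (hp i)
          _ = D * B := mul_comm _ _
      linarith
    calc ∑ i, s x i * l i m x
        ≤ ∑ i, s x i * (l i (p i) x + β / 2 * ‖m - p i‖ ^ 2 + D * B) :=
          Finset.sum_le_sum fun i _ => hterm i
      _ = (∑ i, s x i * (l i (p i) x + β / 2 * ‖m - p i‖ ^ 2)) + (∑ i, s x i) * (D * B) := by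
          rw [Finset.sum_mul, ← Finset.sum_add_distrib]
          exact Finset.sum_congr rfl fun i _ => by ring
      _ = _ := by rw [hssum x, one_mul]
  · -- optimality of the CCMP
    intro m'
    have hkey := ccmp_mean_min (s x) (hs x) (hssum x) p m'
    have hsplit : ∀ m'' : EuclideanSpace ℝ (Fin d),
        ∑ i, s x i * (l i (p i) x + β / 2 * ‖m'' - p i‖ ^ 2)
          = (∑ i, s x i * l i (p i) x) + β / 2 * ∑ i, s x i * ‖m'' - p i‖ ^ 2 := by
      intro m''
      rw [Finset.mul_sum, ← Finset.sum_add_distrib]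
      exact Finset.sum_congr rfl fun i _ => by ring
    rw [hsplit, hsplit]
    have := mul_le_mul_of_nonneg_left hkey (by linarith : (0:ℝ) ≤ β / 2)
    linarith
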